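/- Let G = (V, E, w, μ) be a submodular hypergraph, p ≥ 1, and k ∈ {1, …, N}. Then the k-th variational eigenvalue of △_p satisfies λ_k^{(p)} ≤ (min{ζ(E), k})^{p−1} · h_k, where ζ(E) = max_{e∈E} |e|. If moreover G is homogeneous, i.e., w_e(S) = 1 for all e ∈ E and all S ∈ 2^e ∖ {∅, e}, then the tighter bound λ_k^{(p)} ≤ 2^{p−1} · h_k holds. -/

import Mathlib

open scoped BigOperators
open Finset

noncomputable section

/-- A set function on the ground set `Fin N` is submodular:
`F(S ∪ T) + F(S ∩ T) ≤ F(S) + F(T)` for all `S, T`. -/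
def Submodular {N : ℕ} (F : Finset (Fin N) → ℝ) : Prop :=
  ∀ S T : Finset (Fin N), F (S ∪ T) + F (S ∩ T) ≤ F S + F T

/-- The Lovász extension of a set function, written in its (tie-breaking independent)
level-set integral form, which agrees with the usual sorted-sum definition
`f(x) = Σ_{j=1}^{N-1} F({i_1,…,i_j})(x_{i_j} − x_{i_{j+1}})` for a nonincreasing
ordering `x_{i_1} ≥ … ≥ x_{i_N}`. -/
def lovasz {N : ℕ} (F : Finset (Fin N) → ℝ) (x : Fin N → ℝ) : ℝ :=
  ∫ t in (⨅ v, x v)..(⨆ v, x v), F (Finset.univ.filter fun v => t < x v)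

/-- The inner product `⟨y, x⟩ = Σ_v y_v x_v`. -/
def dotp {N : ℕ} (y x : Fin N → ℝ) : ℝ := ∑ v, y v * x v

/-- The set of subgradients of `f : ℝ^N → ℝ` at `x`. -/
def subgradients {N : ℕ} (f : (Fin N → ℝ) → ℝ) (x : Fin N → ℝ) : Set (Fin N → ℝ) :=
  {y | ∀ x', dotp y (x' - x) ≤ f x' - f x}

/-- The base polytope of a set function: `y(S) ≤ F(S)` for all `S ⊆ V` and `y(V) = 0`. -/
def basePolytope {N : ℕ} (F : Finset (Fin N) → ℝ) : Set (Fin N → ℝ) :=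
  {y | (∀ S : Finset (Fin N), ∑ v ∈ S, y v ≤ F S) ∧ ∑ v, y v = 0}

/-- The sign function (`sgn 0 = 0`). -/
def sgn (a : ℝ) : ℝ := if 0 < a then 1 else if a < 0 then -1 else 0

/-- A vector is nonconstant. -/
def Nonconstant {N : ℕ} (x : Fin N → ℝ) : Prop := ∃ u v, x u ≠ x v

/-- Restriction of a vector to a subset of vertices (zero outside that subset). -/
def restrictVec {N : ℕ} (x : Fin N → ℝ) (C : Finset (Fin N)) : Fin N → ℝ :=
  fun v => if v ∈ C then x v else 0

/-- Euclidean norm on `ℝ^N`. -/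
def l2norm {N : ℕ} (z : Fin N → ℝ) : ℝ := Real.sqrt (∑ v, z v ^ 2)

/-- Supremum norm on `ℝ^N`. -/
def linfNorm {N : ℕ} (z : Fin N → ℝ) : ℝ := ⨆ v, |z v|

/-- A submodular hypergraph `G = (V, E, w, μ)` on `V = Fin N`: hyperedges `E`,
positive vertex weights `μ`, and for each hyperedge `e ∈ E` a scalar `θ_e > 0`
together with a normalized symmetric submodular weight `w_e : 2^e → [0,1]`
(extended to all of `2^V` by `w_e(S) = w_e(S ∩ e)`). -/
structure SubmodularHypergraph (N : ℕ) where
  E : Finset (Finset (Fin N))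
  μ : Fin N → ℝ
  μ_pos : ∀ v, 0 < μ v
  θ : Finset (Fin N) → ℝ
  θ_pos : ∀ e ∈ E, 0 < θ e
  w : Finset (Fin N) → Finset (Fin N) → ℝ
  w_inter : ∀ e ∈ E, ∀ S, w e S = w e (S ∩ e)
  w_submodular : ∀ e ∈ E, Submodular (w e)
  w_nonneg : ∀ e ∈ E, ∀ S, 0 ≤ w e S
  w_le_one : ∀ e ∈ E, ∀ S, w e S ≤ 1
  w_empty : ∀ e ∈ E, w e ∅ = 0
  w_normalized : ∀ e ∈ E, ∃ S ⊆ e, w e S = 1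
  w_symm : ∀ e ∈ E, ∀ S ⊆ e, w e S = w e (e \ S)

namespace SubmodularHypergraph

variable {N : ℕ} (G : SubmodularHypergraph N)

/-- `vol(S) = Σ_{v ∈ S} μ_v`. -/
def vol (S : Finset (Fin N)) : ℝ := ∑ v ∈ S, G.μ v

/-- `vol(∂S) = Σ_{e ∈ E} θ_e w_e(S)`. -/
def volB (S : Finset (Fin N)) : ℝ := ∑ e ∈ G.E, G.θ e * G.w e S

/-- The Lovász extension `f_e` of the hyperedge weight `w_e`. -/
def fe (e : Finset (Fin N)) (x : Fin N → ℝ) : ℝ := lovasz (G.w e) x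

/-- `Q_p(x) = Σ_{e ∈ E} θ_e f_e(x)^p`. -/
def Q (p : ℝ) (x : Fin N → ℝ) : ℝ := ∑ e ∈ G.E, G.θ e * G.fe e x ^ p

/-- `‖x‖_{ℓp,μ}^p = Σ_v μ_v |x_v|^p`. -/
def normLpPow (p : ℝ) (x : Fin N → ℝ) : ℝ := ∑ v, G.μ v * |x v| ^ p

/-- `G` is connected: `vol(∂S) > 0` for all nonempty proper `S ⊂ V`. -/
def Connected : Prop :=
  ∀ S : Finset (Fin N), S.Nonempty → S ≠ Finset.univ → 0 < G.volB S

/-- Vertices `u, v` are connected in `G`: every `S` with `u ∈ S`, `v ∉ S` has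
`vol(∂S) > 0`. -/
def VertConnected (u v : Fin N) : Prop :=
  ∀ S : Finset (Fin N), u ∈ S → v ∉ S → 0 < G.volB S

/-- The conductance `c(S) = vol(∂S) / min{vol(S), vol(V∖S)}`. -/
def conductance (S : Finset (Fin N)) : ℝ := G.volB S / min (G.vol S) (G.vol Sᶜ)

/-- The degree `d_v = Σ_{e ∈ E : v ∈ e} θ_e`. -/
def degree (v : Fin N) : ℝ := ∑ e ∈ G.E.filter (fun e => v ∈ e), G.θ e

/-- `τ = max_v d_v / μ_v`. -/
def tau : ℝ := ⨆ v, G.degree v / G.μ v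

/-- `G` is homogeneous: `w_e(S) = 1` for every `S ∈ 2^e ∖ {∅, e}`. -/
def Homogeneous : Prop :=
  ∀ e ∈ G.E, ∀ S ⊆ e, S ≠ ∅ → S ≠ e → G.w e S = 1

/-- `(λ, x)` is an eigenpair of the `p`-Laplacian `△_p` (for `p > 1` and for `p = 1`). -/
def IsEigenpair (p lam : ℝ) (x : Fin N → ℝ) : Prop :=
  x ≠ 0 ∧
  ∃ y : Finset (Fin N) → Fin N → ℝ,
    (∀ e ∈ G.E, y e ∈ basePolytope (G.w e) ∧
        ∀ z ∈ basePolytope (G.w e), dotp z x ≤ dotp (y e) x) ∧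
    (if 1 < p then
        ∀ v, ∑ e ∈ G.E, G.θ e * G.fe e x ^ (p - 1) * y e v
              = lam * G.μ v * (|x v| ^ (p - 1) * sgn (x v))
      else
        (∀ v, x v ≠ 0 → ∑ e ∈ G.E, G.θ e * y e v = lam * G.μ v * sgn (x v)) ∧
        (∀ v, x v = 0 → |∑ e ∈ G.E, G.θ e * y e v| ≤ lam * G.μ v))

/-- Vertices `u, v` are connected inside the induced sub-hypergraph `G[W]`
(the boundary volume in `G[W]` of `S ⊆ W` equals `Σ_{e ∈ E} θ_e w_e(S)`). -/
def VertConnectedIn (W : Finset (Fin N)) (u v : Fin N) : Prop :=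
  u = v ∨ ∀ S ⊆ W, u ∈ S → v ∉ S → 0 < G.volB S

/-- `C` is (the vertex set of) a connected component of the induced sub-hypergraph `G[W]`. -/
def IsComponent (W C : Finset (Fin N)) : Prop :=
  C ⊆ W ∧ C.Nonempty ∧
    (∀ u ∈ C, ∀ v ∈ C, G.VertConnectedIn W u v) ∧
    (∀ u ∈ C, ∀ v ∈ W, G.VertConnectedIn W u v → v ∈ C)

end SubmodularHypergraph

def posSupp {N : ℕ} (x : Fin N → ℝ) : Finset (Fin N) := Finset.univ.filter fun v => 0 < x v
def negSupp {N : ℕ} (x : Fin N → ℝ) : Finset (Fin N) := Finset.univ.filter fun v => x v < 0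
def nonnegSupp {N : ℕ} (x : Fin N → ℝ) : Finset (Fin N) := Finset.univ.filter fun v => 0 ≤ x v
def nonposSupp {N : ℕ} (x : Fin N → ℝ) : Finset (Fin N) := Finset.univ.filter fun v => x v ≤ 0

namespace SubmodularHypergraph

variable {N : ℕ} (G : SubmodularHypergraph N)

/-- The number of strong nodal domains of `x` (positive ones plus negative ones). -/
def strongNodalCount (x : Fin N → ℝ) : ℕ :=
  {C : Finset (Fin N) | G.IsComponent (posSupp x) C}.ncard +
  {C : Finset (Fin N) | G.IsComponent (negSupp x) C}.ncard

/-- The number of weak nodal domains of `x` (positive ones plus negative ones). -/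
def weakNodalCount (x : Fin N → ℝ) : ℕ :=
  {C : Finset (Fin N) | G.IsComponent (nonnegSupp x) C}.ncard +
  {C : Finset (Fin N) | G.IsComponent (nonposSupp x) C}.ncard

/-- The collection of strong nodal domains of `x`. -/
def strongNodalDomains (x : Fin N → ℝ) : Set (Finset (Fin N)) :=
  {C | G.IsComponent (posSupp x) C ∨ G.IsComponent (negSupp x) C}

/-- The collection of weak nodal domains of `x`. -/
def weakNodalDomains (x : Fin N → ℝ) : Set (Finset (Fin N)) :=
  {C | G.IsComponent (nonnegSupp x) C ∨ G.IsComponent (nonposSupp x) C}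

/-- `Z_{p,μ}(x) = min_c ‖x − c·𝟙‖_{ℓp,μ}^p`. -/
def Z (p : ℝ) (x : Fin N → ℝ) : ℝ := ⨅ c : ℝ, ∑ v, G.μ v * |x v - c| ^ p

/-- `𝓡_p(x) = Q_p(x) / Z_{p,μ}(x)`. -/
def Rq (p : ℝ) (x : Fin N → ℝ) : ℝ := G.Q p x / G.Z p x

/-- The `k`-way Cheeger constant `h_k`. -/
def cheegerConst (k : ℕ) : ℝ :=
  sInf {c : ℝ | ∃ S : Fin k → Finset (Fin N),
    (∀ i, (S i).Nonempty) ∧ (∀ i j, i ≠ j → Disjoint (S i) (S j)) ∧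
    c = ⨆ i, G.conductance (S i)}

end SubmodularHypergraph

/-- There is an odd continuous map `h : A → ℝ^k ∖ {0}`. -/
def genusLE {N : ℕ} (A : Set (Fin N → ℝ)) (k : ℕ) : Prop :=
  ∃ h : (Fin N → ℝ) → (Fin k → ℝ),
    ContinuousOn h A ∧ (∀ x ∈ A, h (-x) = -h x) ∧ ∀ x ∈ A, h x ≠ 0

/-- The Krasnoselski genus of a set. -/
def genus {N : ℕ} (A : Set (Fin N → ℝ)) : ℕ∞ :=
  sInf ((fun n : ℕ => (n : ℕ∞)) '' {n | genusLE A n})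

namespace SubmodularHypergraph

variable {N : ℕ} (G : SubmodularHypergraph N)

/-- The `k`-th variational eigenvalue `λ_k^{(p)}` of `△_p`:
`min` over closed symmetric `A ⊆ S_{p,μ}` with `γ(A) ≥ k` of `max_{x ∈ A} Q_p(x)`. -/
def varEigen (p : ℝ) (k : ℕ) : ℝ :=
  sInf ((fun A : Set (Fin N → ℝ) => sSup (G.Q p '' A)) ''
    {A | IsClosed A ∧ (∀ x ∈ A, -x ∈ A) ∧
         A ⊆ {x | G.normLpPow p x = 1} ∧ (k : ℕ∞) ≤ genus A})

end SubmodularHypergraph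

/-! ### Auxiliary lemmas for Statement 9 -/

section GenusAux

lemma genusLE_zero_iff {N : ℕ} (A : Set (Fin N → ℝ)) : genusLE A 0 ↔ A = ∅ := by
  constructor
  · rintro ⟨h, -, -, h0⟩
    by_contra hne
    obtain ⟨x, hx⟩ := Set.nonempty_iff_ne_empty.2 hne
    exact h0 x hx (funext fun j => j.elim0)
  · rintro rfl
    exact ⟨fun _ => 0, continuousOn_empty _, fun x hx => hx.elim, fun x hx => hx.elim⟩

lemma le_genus_iff {N : ℕ} (A : Set (Fin N → ℝ)) (k : ℕ) :
    (k : ℕ∞) ≤ genus A ↔ ∀ n, genusLE A n → k ≤ n := by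
  rw [genus, le_sInf_iff]
  constructor
  · intro H n hn
    exact_mod_cast H (n : ℕ∞) ⟨n, hn, rfl⟩
  · rintro H b ⟨n, hn, rfl⟩
    show (k : ℕ∞) ≤ (n : ℕ∞)
    exact_mod_cast H n hn

lemma nonempty_of_le_genus {N k : ℕ} {A : Set (Fin N → ℝ)} (hk : 1 ≤ k)
    (h : (k : ℕ∞) ≤ genus A) : A.Nonempty := by
  rw [Set.nonempty_iff_ne_empty]
  intro hA
  have h0 : genusLE A 0 := (genusLE_zero_iff A).2 hA
  have := (le_genus_iff A k).1 h 0 h0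
  omega

lemma genusLE_comp {N M : ℕ} {A : Set (Fin N → ℝ)} {B : Set (Fin M → ℝ)}
    {f : (Fin N → ℝ) → (Fin M → ℝ)}
    (hf : ContinuousOn f A) (hmap : Set.MapsTo f A B)
    (hodd : ∀ x ∈ A, f (-x) = -f x) {n : ℕ} (h : genusLE B n) : genusLE A n := by
  obtain ⟨g, hg, hgodd, hgne⟩ := h
  refine ⟨g ∘ f, hg.comp hf hmap, fun x hx => ?_, fun x hx => hgne _ (hmap hx)⟩
  simp only [Function.comp_apply, hodd x hx, hgodd (f x) (hmap hx)]

/-- Odd Tietze extension: a continuous odd map on a closed symmetric set extends to a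
globally continuous odd map. -/
lemma exists_odd_extension {N n : ℕ} {Z : Set (Fin N → ℝ)} (hZ : IsClosed Z)
    (hsymm : ∀ x ∈ Z, -x ∈ Z) {u : (Fin N → ℝ) → (Fin n → ℝ)}
    (hu : ContinuousOn u Z) (huodd : ∀ x ∈ Z, u (-x) = -u x) :
    ∃ v : (Fin N → ℝ) → (Fin n → ℝ), Continuous v ∧ (∀ x, v (-x) = -v x) ∧
      ∀ x ∈ Z, v x = u x := by
  obtain ⟨g, hg⟩ := ContinuousMap.exists_restrict_eq (X := Fin N → ℝ) hZ
    ⟨Z.restrict u, continuousOn_iff_continuous_restrict.1 hu⟩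
  have hgx : ∀ x ∈ Z, g x = u x := by
    intro x hx
    have := DFunLike.congr_fun hg (⟨x, hx⟩ : Z)
    exact this
  refine ⟨fun x => (2 : ℝ)⁻¹ • (g x - g (-x)), ?_, ?_, ?_⟩
  · exact Continuous.smul (continuous_const (y := (2 : ℝ)⁻¹)) ((map_continuous g).sub ((map_continuous g).comp continuous_neg))
  · intro x
    show (2 : ℝ)⁻¹ • (g (-x) - g (- -x)) = -((2 : ℝ)⁻¹ • (g x - g (-x)))
    rw [neg_neg]
    funext j
    simp only [Pi.smul_apply, Pi.sub_apply, Pi.neg_apply, smul_eq_mul]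
    ring
  · intro x hx
    show (2 : ℝ)⁻¹ • (g x - g (-x)) = u x
    rw [hgx x hx, hgx _ (hsymm x hx), huodd x hx, sub_neg_eq_add]
    funext j
    simp only [Pi.smul_apply, Pi.add_apply, smul_eq_mul]
    ring

/-- From a certificate set `A₀` of genus `≥ k`, produce a closed symmetric subset `Z` of
genus `≥ k` together with an explicit odd continuous nonvanishing map `Z → ℝ^k ∖ {0}`. -/
lemma exists_genus_core {N : ℕ} {A₀ : Set (Fin N → ℝ)} (hA₀c : IsClosed A₀)
    (hA₀s : ∀ x ∈ A₀, -x ∈ A₀) (k : ℕ)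
    (hgen : ∀ n, genusLE A₀ n → k ≤ n) (hfin : ∃ n, genusLE A₀ n) :
    ∃ (Z : Set (Fin N → ℝ)) (φ : (Fin N → ℝ) → (Fin k → ℝ)),
      Z ⊆ A₀ ∧ IsClosed Z ∧ (∀ x ∈ Z, -x ∈ Z) ∧
      ContinuousOn φ Z ∧ (∀ x ∈ Z, φ (-x) = -φ x) ∧ (∀ x ∈ Z, φ x ≠ 0) ∧
      (∀ n, genusLE Z n → k ≤ n) := by
  classical
  set m := sInf {n | genusLE A₀ n} with hm_def
  have hm : genusLE A₀ m := Nat.sInf_mem hfin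
  have hmin : ∀ n, genusLE A₀ n → m ≤ n := fun n hn => Nat.sInf_le hn
  have hkm : k ≤ m := hgen m hm
  obtain ⟨h, hhc, hhodd, hhne⟩ := hm
  -- the "tail" map collecting coordinates `k ≤ j < m`
  set tl : (Fin N → ℝ) → (Fin (m - k) → ℝ) :=
    fun z j => h z ⟨k + (j : ℕ), by omega⟩ with htl_def
  have htlc : ContinuousOn tl A₀ := by
    rw [continuousOn_pi]
    intro j
    exact (continuous_apply _).comp_continuousOn hhc
  set Z : Set (Fin N → ℝ) := A₀ ∩ tl ⁻¹' {0} with hZ_def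
  have hZA₀ : Z ⊆ A₀ := Set.inter_subset_left
  have hZc : IsClosed Z :=
    htlc.preimage_isClosed_of_isClosed hA₀c isClosed_singleton
  have hZtl : ∀ z ∈ Z, ∀ j : Fin m, k ≤ (j : ℕ) → h z j = 0 := by
    rintro z ⟨hzA, hz0⟩ j hj
    have : tl z ⟨(j : ℕ) - k, by omega⟩ = 0 := by
      have := (Set.mem_singleton_iff.1 hz0)
      exact congrFun this _
    convert this using 2
    ext
    simp
    omega
  have hZs : ∀ z ∈ Z, -z ∈ Z := by
    rintro z hz
    refine ⟨hA₀s z (hZA₀ hz), ?_⟩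
    have : tl (-z) = -tl z := by
      funext j
      simp only [htl_def, hhodd z (hZA₀ hz), Pi.neg_apply]
    rw [Set.mem_preimage, this, Set.mem_singleton_iff]
    have : tl z = 0 := hz.2
    rw [this]; simp
  set φ : (Fin N → ℝ) → (Fin k → ℝ) := fun z j => h z (Fin.castLE hkm j) with hφ_def
  have hφc : ContinuousOn φ Z := by
    rw [continuousOn_pi]
    intro j
    exact (continuous_apply _).comp_continuousOn (hhc.mono hZA₀)
  have hφodd : ∀ z ∈ Z, φ (-z) = -φ z := by
    intro z hz
    funext j
    simp only [hφ_def, hhodd z (hZA₀ hz), Pi.neg_apply]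
  have hφne : ∀ z ∈ Z, φ z ≠ 0 := by
    intro z hz h0
    apply hhne z (hZA₀ hz)
    funext j
    by_cases hj : (j : ℕ) < k
    · have := congrFun h0 ⟨(j : ℕ), hj⟩
      simpa [hφ_def, Fin.castLE, Fin.ext_iff] using this
    · exact hZtl z hz j (by omega)
  refine ⟨Z, φ, hZA₀, hZc, hZs, hφc, hφodd, hφne, ?_⟩
  -- the genus bound for Z
  intro n hn
  obtain ⟨u, huc, huodd, hune⟩ := hn
  obtain ⟨v, hvc, hvodd, hvu⟩ := exists_odd_extension hZc hZs huc huodd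
  -- build a map on A₀ into ℝ^(n + (m-k))
  set W : (Fin N → ℝ) → (Fin (n + (m - k)) → ℝ) :=
    fun z i => if hi : (i : ℕ) < n then v z ⟨(i : ℕ), hi⟩
      else tl z ⟨(i : ℕ) - n, by omega⟩ with hW_def
  have hWle : genusLE A₀ (n + (m - k)) := by
    refine ⟨W, ?_, ?_, ?_⟩
    · rw [continuousOn_pi]
      intro i
      show ContinuousOn (fun z => if hi : (i : ℕ) < n then v z ⟨(i : ℕ), hi⟩
        else tl z ⟨(i : ℕ) - n, by omega⟩) A₀
      split_ifs with hi
      · exact ((continuous_pi_iff.1 hvc) _).continuousOn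
      · exact continuousOn_pi.1 htlc _
    · intro z hz
      funext i
      simp only [hW_def, Pi.neg_apply]
      split_ifs with hi
      · rw [hvodd z]; simp
      · show tl (-z) _ = _
        simp only [htl_def, hhodd z hz, Pi.neg_apply]
    · intro z hz hW0
      have hztl : tl z = 0 := by
        funext j
        have := congrFun hW0 ⟨n + (j : ℕ), by omega⟩
        simp only [hW_def, Pi.zero_apply] at this
        rw [dif_neg (by omega)] at this
        convert this using 2
        ext; simp
        rfl
      have hzZ : z ∈ Z := ⟨hz, by simpa [Set.mem_preimage] using hztl⟩
      apply hune z hzZ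
      funext j
      have := congrFun hW0 ⟨(j : ℕ), by omega⟩
      simp only [hW_def, Pi.zero_apply] at this
      rw [dif_pos (by omega)] at this
      rw [← hvu z hzZ]
      convert this using 2
      rfl
  have := hmin _ hWle
  omega

end GenusAux


section HypergraphAux

open MeasureTheory intervalIntegral

namespace SubmodularHypergraph

variable {N : ℕ} (G : SubmodularHypergraph N)

lemma w_self_eq_zero {e : Finset (Fin N)} (he : e ∈ G.E) : G.w e e = 0 := by
  have := G.w_symm e he ∅ (Finset.empty_subset e)
  rw [Finset.sdiff_empty] at this
  rw [← this, G.w_empty e he]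

lemma w_compl {e : Finset (Fin N)} (he : e ∈ G.E) (U : Finset (Fin N)) :
    G.w e U = G.w e Uᶜ := by
  rw [G.w_inter e he U, G.w_inter e he Uᶜ]
  have h1 : Uᶜ ∩ e = e \ (U ∩ e) := by
    ext v
    simp [Finset.mem_compl, Finset.mem_sdiff]
    tauto
  rw [h1, ← G.w_symm e he (U ∩ e) Finset.inter_subset_right]

lemma edge_nonempty {e : Finset (Fin N)} (he : e ∈ G.E) : e.Nonempty := by
  obtain ⟨S, hSe, hS1⟩ := G.w_normalized e he
  rcases Finset.eq_empty_or_nonempty e with he' | h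
  · exfalso
    rw [he'] at hSe
    rw [Finset.subset_empty.1 hSe, G.w_empty e he] at hS1
    norm_num at hS1
  · exact h

lemma w_union_le {e : Finset (Fin N)} (he : e ∈ G.E) (A B : Finset (Fin N)) :
    G.w e (A ∪ B) ≤ G.w e A + G.w e B := by
  have h := G.w_submodular e he A B
  have h2 := G.w_nonneg e he (A ∩ B)
  linarith

lemma w_biUnion_le {e : Finset (Fin N)} (he : e ∈ G.E) {ι : Type*} [DecidableEq ι]
    (J : Finset ι) (S : ι → Finset (Fin N)) :
    G.w e (J.biUnion S) ≤ ∑ i ∈ J, G.w e (S i) := by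
  classical
  induction J using Finset.induction_on with
  | empty => simp [G.w_empty e he]
  | @insert a J' hnot ih =>
    rw [Finset.biUnion_insert, Finset.sum_insert hnot]
    calc G.w e (S a ∪ J'.biUnion S) ≤ G.w e (S a) + G.w e (J'.biUnion S) :=
          G.w_union_le he _ _
      _ ≤ _ := by linarith

end SubmodularHypergraph

lemma iInf_le_iSup_fin {N : ℕ} (x : Fin N → ℝ) : (⨅ v, x v) ≤ ⨆ v, x v := by
  rcases isEmpty_or_nonempty (Fin N) with h | h
  · rw [Real.iInf_of_isEmpty, Real.iSup_of_isEmpty]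
  · obtain ⟨v⟩ := h
    exact le_trans (ciInf_le (Set.Finite.bddBelow (Set.finite_range x)) v)
      (le_ciSup (Set.Finite.bddAbove (Set.finite_range x)) v)

lemma measurableSet_levelset_eq {N : ℕ} (x : Fin N → ℝ) (S : Finset (Fin N)) :
    MeasurableSet {τ : ℝ | (Finset.univ.filter fun v => τ < x v) = S} := by
  classical
  have hset : {τ : ℝ | (Finset.univ.filter fun v => τ < x v) = S}
      = ⋂ v, {τ : ℝ | τ < x v ↔ v ∈ S} := by
    ext τ
    simp only [Set.mem_setOf_eq, Set.mem_iInter, Finset.ext_iff, Finset.mem_filter,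
      Finset.mem_univ, true_and]
  rw [hset]
  refine MeasurableSet.iInter fun v => ?_
  by_cases hv : v ∈ S
  · have : {τ : ℝ | τ < x v ↔ v ∈ S} = Set.Iio (x v) := by ext τ; simp [hv]
    rw [this]; exact measurableSet_Iio
  · have : {τ : ℝ | τ < x v ↔ v ∈ S} = Set.Ici (x v) := by
      ext τ; simp [hv, not_lt]
    rw [this]; exact measurableSet_Ici

lemma intervalIntegrable_levelset {N : ℕ} (F : Finset (Fin N) → ℝ) (x : Fin N → ℝ)
    (a b : ℝ) :
    IntervalIntegrable (fun τ => F (Finset.univ.filter fun v => τ < x v))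
      MeasureTheory.volume a b := by
  classical
  have hrw : (fun τ => F (Finset.univ.filter fun v => τ < x v))
      = fun τ => ∑ S : Finset (Fin N),
          Set.indicator {τ' : ℝ | (Finset.univ.filter fun v => τ' < x v) = S}
            (fun _ => F S) τ := by
    funext τ
    rw [Finset.sum_eq_single (Finset.univ.filter fun v => τ < x v)]
    · rw [Set.indicator_of_mem (by exact rfl)]
    · intro S _ hS
      exact Set.indicator_of_notMem (fun h => hS (by exact h.symm)) _
    · intro h
      exact absurd (Finset.mem_univ _) h
  rw [hrw]
  rw [intervalIntegrable_iff]
  refine MeasureTheory.integrable_finset_sum _ fun S _ => ?_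
  refine MeasureTheory.Integrable.indicator ?_ (measurableSet_levelset_eq x S)
  exact MeasureTheory.integrableOn_const measure_Ioc_lt_top.ne enorm_ne_top

lemma intervalIntegrable_indicator_Ico (a b m M : ℝ) :
    IntervalIntegrable ((Set.Ico a b).indicator fun _ => (1 : ℝ))
      MeasureTheory.volume m M := by
  rw [intervalIntegrable_iff]
  refine MeasureTheory.Integrable.indicator ?_ measurableSet_Ico
  exact MeasureTheory.integrableOn_const measure_Ioc_lt_top.ne enorm_ne_top

lemma integral_indicator_Ico_le (a b m M : ℝ) (hmM : m ≤ M) :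
    (∫ τ in m..M, (Set.Ico a b).indicator (fun _ => (1 : ℝ)) τ) ≤ max (b - a) 0 := by
  rw [intervalIntegral.integral_of_le hmM]
  rw [MeasureTheory.integral_indicator_const (1 : ℝ) measurableSet_Ico]
  rw [MeasureTheory.measureReal_def, MeasureTheory.Measure.restrict_apply measurableSet_Ico]
  have h1 : (MeasureTheory.volume (Set.Ico a b ∩ Set.Ioc m M)).toReal
      ≤ (MeasureTheory.volume (Set.Ico a b)).toReal := by
    apply ENNReal.toReal_mono
    · rw [Real.volume_Ico]; exact ENNReal.ofReal_ne_top
    · exact MeasureTheory.measure_mono Set.inter_subset_left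
  simp only [smul_eq_mul, mul_one]
  refine le_trans h1 ?_
  rw [Real.volume_Ico, ENNReal.toReal_ofReal']

namespace SubmodularHypergraph

variable {N : ℕ} (G : SubmodularHypergraph N)

lemma fe_nonneg {e : Finset (Fin N)} (he : e ∈ G.E) (x : Fin N → ℝ) :
    0 ≤ G.fe e x := by
  rw [fe, lovasz]
  apply intervalIntegral.integral_nonneg (iInf_le_iSup_fin x)
  intro τ _
  exact G.w_nonneg e he _

lemma Q_nonneg {p : ℝ} (hp : 1 ≤ p) (x : Fin N → ℝ) : 0 ≤ G.Q p x := by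
  apply Finset.sum_nonneg
  intro e he
  exact mul_nonneg (le_of_lt (G.θ_pos e he)) (Real.rpow_nonneg (G.fe_nonneg he x) p)

end SubmodularHypergraph

end HypergraphAux


section PsiAux

open MeasureTheory intervalIntegral

/-- The vector `Σ_i t_i 1_{S_i}`. -/
def psiMap {N k : ℕ} (S : Fin k → Finset (Fin N)) (t : Fin k → ℝ) : Fin N → ℝ :=
  fun v => ∑ i, t i * (if v ∈ S i then 1 else 0)

lemma psiMap_apply_mem {N k : ℕ} {S : Fin k → Finset (Fin N)}
    (hdisj : ∀ i j, i ≠ j → Disjoint (S i) (S j)) (t : Fin k → ℝ) {v : Fin N} {i : Fin k}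
    (hv : v ∈ S i) : psiMap S t v = t i := by
  rw [psiMap, Finset.sum_eq_single i]
  · simp [hv]
  · intro j _ hji
    have : v ∉ S j := fun hvj => (Finset.disjoint_left.1 (hdisj j i hji)) hvj hv
    simp [this]
  · intro h; exact absurd (Finset.mem_univ _) h

lemma psiMap_apply_not {N k : ℕ} {S : Fin k → Finset (Fin N)} (t : Fin k → ℝ) {v : Fin N}
    (hv : ∀ i, v ∉ S i) : psiMap S t v = 0 := by
  rw [psiMap]
  apply Finset.sum_eq_zero
  intro i _
  simp [hv i]

lemma psiMap_neg {N k : ℕ} (S : Fin k → Finset (Fin N)) (t : Fin k → ℝ) :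
    psiMap S (-t) = -psiMap S t := by
  funext v
  simp only [psiMap, Pi.neg_apply, neg_mul, ← Finset.sum_neg_distrib]

lemma continuous_psiMap {N k : ℕ} (S : Fin k → Finset (Fin N)) :
    Continuous fun t : Fin k → ℝ => psiMap S t := by
  apply continuous_pi
  intro v
  exact continuous_finset_sum _ fun i _ => (continuous_apply i).mul continuous_const

lemma levelset_psi_pos {N k : ℕ} {S : Fin k → Finset (Fin N)}
    (hdisj : ∀ i j, i ≠ j → Disjoint (S i) (S j)) (t : Fin k → ℝ) {τ : ℝ} (hτ : 0 ≤ τ) :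
    (Finset.univ.filter fun v => τ < psiMap S t v)
      = (Finset.univ.filter fun i => τ < t i).biUnion S := by
  classical
  ext v
  simp only [Finset.mem_filter, Finset.mem_univ, true_and, Finset.mem_biUnion]
  constructor
  · intro hlt
    by_cases hv : ∃ i, v ∈ S i
    · obtain ⟨i, hi⟩ := hv
      refine ⟨i, ?_, hi⟩
      rwa [psiMap_apply_mem hdisj t hi] at hlt
    · push_neg at hv
      rw [psiMap_apply_not t hv] at hlt
      linarith
  · rintro ⟨i, hi, hvi⟩
    rw [psiMap_apply_mem hdisj t hvi]
    exact hi

lemma levelset_psi_neg {N k : ℕ} {S : Fin k → Finset (Fin N)}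
    (hdisj : ∀ i j, i ≠ j → Disjoint (S i) (S j)) (t : Fin k → ℝ) {τ : ℝ} (hτ : τ < 0) :
    (Finset.univ.filter fun v => τ < psiMap S t v)ᶜ
      = (Finset.univ.filter fun i => t i ≤ τ).biUnion S := by
  classical
  ext v
  simp only [Finset.mem_compl, Finset.mem_filter, Finset.mem_univ, true_and,
    Finset.mem_biUnion, not_lt]
  constructor
  · intro hle
    by_cases hv : ∃ i, v ∈ S i
    · obtain ⟨i, hi⟩ := hv
      refine ⟨i, ?_, hi⟩
      rwa [psiMap_apply_mem hdisj t hi] at hle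
    · push_neg at hv
      rw [psiMap_apply_not t hv] at hle
      linarith
  · rintro ⟨i, hi, hvi⟩
    rw [psiMap_apply_mem hdisj t hvi]
    exact hi

namespace SubmodularHypergraph

variable {N : ℕ} (G : SubmodularHypergraph N)

lemma w_levelset_le {k : ℕ} {S : Fin k → Finset (Fin N)}
    (hdisj : ∀ i j, i ≠ j → Disjoint (S i) (S j)) (t : Fin k → ℝ)
    {e : Finset (Fin N)} (he : e ∈ G.E) (τ : ℝ) :
    G.w e (Finset.univ.filter fun v => τ < psiMap S t v)
      ≤ ∑ i, G.w e (S i) *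
          ((Set.Ico (0:ℝ) (t i)).indicator (fun _ => (1:ℝ)) τ
            + (Set.Ico (t i) (0:ℝ)).indicator (fun _ => (1:ℝ)) τ) := by
  classical
  rcases le_or_gt 0 τ with hτ | hτ
  · rw [levelset_psi_pos hdisj t hτ]
    refine le_trans (G.w_biUnion_le he _ S) ?_
    rw [Finset.sum_filter]
    apply Finset.sum_le_sum
    intro i _
    by_cases hi : τ < t i
    · rw [if_pos hi, Set.indicator_of_mem (Set.mem_Ico.2 ⟨hτ, hi⟩)]
      have h2 : (0:ℝ) ≤ (Set.Ico (t i) (0:ℝ)).indicator (fun _ => (1:ℝ)) τ :=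
        Set.indicator_nonneg (fun _ _ => zero_le_one) τ
      nlinarith [G.w_nonneg e he (S i)]
    · rw [if_neg hi]
      have h1 : (0:ℝ) ≤ (Set.Ico (0:ℝ) (t i)).indicator (fun _ => (1:ℝ)) τ :=
        Set.indicator_nonneg (fun _ _ => zero_le_one) τ
      have h2 : (0:ℝ) ≤ (Set.Ico (t i) (0:ℝ)).indicator (fun _ => (1:ℝ)) τ :=
        Set.indicator_nonneg (fun _ _ => zero_le_one) τ
      have := G.w_nonneg e he (S i)
      positivity
  · rw [G.w_compl he, levelset_psi_neg hdisj t hτ]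
    refine le_trans (G.w_biUnion_le he _ S) ?_
    rw [Finset.sum_filter]
    apply Finset.sum_le_sum
    intro i _
    by_cases hi : t i ≤ τ
    · rw [if_pos hi, Set.indicator_of_mem (Set.mem_Ico.2 ⟨hi, hτ⟩)]
      have h1 : (0:ℝ) ≤ (Set.Ico (0:ℝ) (t i)).indicator (fun _ => (1:ℝ)) τ :=
        Set.indicator_nonneg (fun _ _ => zero_le_one) τ
      nlinarith [G.w_nonneg e he (S i)]
    · rw [if_neg hi]
      have h1 : (0:ℝ) ≤ (Set.Ico (0:ℝ) (t i)).indicator (fun _ => (1:ℝ)) τ :=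
        Set.indicator_nonneg (fun _ _ => zero_le_one) τ
      have h2 : (0:ℝ) ≤ (Set.Ico (t i) (0:ℝ)).indicator (fun _ => (1:ℝ)) τ :=
        Set.indicator_nonneg (fun _ _ => zero_le_one) τ
      have := G.w_nonneg e he (S i)
      positivity

set_option maxHeartbeats 1000000 in
lemma fe_psi_le {k : ℕ} {S : Fin k → Finset (Fin N)}
    (hdisj : ∀ i j, i ≠ j → Disjoint (S i) (S j)) (t : Fin k → ℝ)
    {e : Finset (Fin N)} (he : e ∈ G.E) :
    G.fe e (psiMap S t) ≤ ∑ i, |t i| * G.w e (S i) := by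
  classical
  set x := psiMap S t with hx
  set m := ⨅ v, x v with hm
  set M := ⨆ v, x v with hM
  have hmM : m ≤ M := iInf_le_iSup_fin x
  set g : ℝ → ℝ := fun τ => ∑ i, G.w e (S i) *
      ((Set.Ico (0:ℝ) (t i)).indicator (fun _ => (1:ℝ)) τ
        + (Set.Ico (t i) (0:ℝ)).indicator (fun _ => (1:ℝ)) τ) with hg
  have hgint : ∀ (a b : ℝ), IntervalIntegrable g MeasureTheory.volume a b := by
    intro a b
    rw [intervalIntegrable_iff]
    apply MeasureTheory.integrable_finset_sum
    intro i _
    apply MeasureTheory.Integrable.const_mul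
    exact (intervalIntegrable_iff.1 (intervalIntegrable_indicator_Ico 0 (t i) a b)).add
      (intervalIntegrable_iff.1 (intervalIntegrable_indicator_Ico (t i) 0 a b))
  have h1 : G.fe e x ≤ ∫ τ in m..M, g τ := by
    rw [fe, lovasz]
    apply intervalIntegral.integral_mono_on hmM (intervalIntegrable_levelset _ x m M)
      (hgint m M)
    intro τ _
    exact G.w_levelset_le hdisj t he τ
  refine le_trans h1 ?_
  rw [hg, intervalIntegral.integral_finset_sum]
  · apply Finset.sum_le_sum
    intro i _
    rw [intervalIntegral.integral_const_mul, intervalIntegral.integral_add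
      (intervalIntegrable_indicator_Ico 0 (t i) m M)
      (intervalIntegrable_indicator_Ico (t i) 0 m M)]
    have hb1 := integral_indicator_Ico_le 0 (t i) m M hmM
    have hb2 := integral_indicator_Ico_le (t i) 0 m M hmM
    have habs : max (t i - 0) 0 + max (0 - t i) 0 = |t i| := by
      rcases le_total 0 (t i) with h | h
      · rw [abs_of_nonneg h]
        rw [max_eq_left (by linarith), max_eq_right (by linarith)]
        ring
      · rw [abs_of_nonpos h]
        rw [max_eq_right (by linarith), max_eq_left (by linarith)]
        ring
    have hwnn := G.w_nonneg e he (S i)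
    calc G.w e (S i) * ((∫ τ in m..M, (Set.Ico (0:ℝ) (t i)).indicator (fun _ => (1:ℝ)) τ)
            + ∫ τ in m..M, (Set.Ico (t i) (0:ℝ)).indicator (fun _ => (1:ℝ)) τ)
        ≤ G.w e (S i) * (max (t i - 0) 0 + max (0 - t i) 0) := by
          apply mul_le_mul_of_nonneg_left _ hwnn
          linarith
      _ = |t i| * G.w e (S i) := by rw [habs]; ring
  · intro i _
    exact (((intervalIntegrable_indicator_Ico 0 (t i) m M).add
      (intervalIntegrable_indicator_Ico (t i) 0 m M)).const_mul _)

lemma fe_le_sup_sub_inf {e : Finset (Fin N)} (he : e ∈ G.E) (x : Fin N → ℝ) :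
    G.fe e x ≤ e.sup' (G.edge_nonempty he) x - e.inf' (G.edge_nonempty he) x := by
  classical
  set a := e.sup' (G.edge_nonempty he) x with ha
  set b := e.inf' (G.edge_nonempty he) x with hb
  have hba : b ≤ a := by
    obtain ⟨v, hv⟩ := G.edge_nonempty he
    exact le_trans (Finset.inf'_le _ hv) (Finset.le_sup' _ hv)
  set m := ⨅ v, x v with hm
  set M := ⨆ v, x v with hM
  have hmM : m ≤ M := iInf_le_iSup_fin x
  have hpt : ∀ τ : ℝ, G.w e (Finset.univ.filter fun v => τ < x v)
      ≤ (Set.Ico b a).indicator (fun _ => (1:ℝ)) τ := by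
    intro τ
    rcases lt_or_ge τ b with hτ | hτ
    · -- e ⊆ level set, so w = w e e = 0
      have hsub : e ⊆ Finset.univ.filter fun v => τ < x v := by
        intro v hv
        refine Finset.mem_filter.2 ⟨Finset.mem_univ _, ?_⟩
        exact lt_of_lt_of_le hτ (Finset.inf'_le _ hv)
      have : (Finset.univ.filter fun v => τ < x v) ∩ e = e :=
        Finset.inter_eq_right.2 hsub
      rw [G.w_inter e he, this, G.w_self_eq_zero he]
      exact Set.indicator_nonneg (fun _ _ => zero_le_one) τ
    rcases lt_or_ge τ a with hτ2 | hτ2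
    · rw [Set.indicator_of_mem (Set.mem_Ico.2 ⟨hτ, hτ2⟩)]
      exact G.w_le_one e he _
    · -- level set misses e
      have : (Finset.univ.filter fun v => τ < x v) ∩ e = ∅ := by
        rw [Finset.eq_empty_iff_forall_notMem]
        intro v hv
        obtain ⟨hv1, hv2⟩ := Finset.mem_inter.1 hv
        have := (Finset.mem_filter.1 hv1).2
        have := Finset.le_sup' x hv2
        linarith
      rw [G.w_inter e he, this, G.w_empty e he]
      exact Set.indicator_nonneg (fun _ _ => zero_le_one) τ
  have h1 : G.fe e x ≤ ∫ τ in m..M, (Set.Ico b a).indicator (fun _ => (1:ℝ)) τ := by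
    rw [fe, lovasz]
    apply intervalIntegral.integral_mono_on hmM (intervalIntegrable_levelset _ x m M)
      (intervalIntegrable_indicator_Ico b a m M)
    intro τ _
    exact hpt τ
  refine le_trans h1 (le_trans (integral_indicator_Ico_le b a m M hmM) ?_)
  rw [max_eq_left (by linarith)]

lemma normLpPow_psi {p : ℝ} (hp : 1 ≤ p) {k : ℕ} {S : Fin k → Finset (Fin N)}
    (hdisj : ∀ i j, i ≠ j → Disjoint (S i) (S j)) (t : Fin k → ℝ) :
    G.normLpPow p (psiMap S t) = ∑ i, |t i| ^ p * G.vol (S i) := by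
  classical
  set U : Finset (Fin N) := Finset.univ.biUnion S with hU
  have hsplit : G.normLpPow p (psiMap S t)
      = ∑ v ∈ U, G.μ v * |psiMap S t v| ^ p + ∑ v ∈ Uᶜ, G.μ v * |psiMap S t v| ^ p := by
    rw [normLpPow, ← Finset.sum_add_sum_compl U]
  rw [hsplit]
  have h2 : ∑ v ∈ Uᶜ, G.μ v * |psiMap S t v| ^ p = 0 := by
    apply Finset.sum_eq_zero
    intro v hv
    have hvn : ∀ i, v ∉ S i := by
      intro i hvi
      exact (Finset.mem_compl.1 hv) (Finset.mem_biUnion.2 ⟨i, Finset.mem_univ _, hvi⟩)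
    rw [psiMap_apply_not t hvn, abs_zero, Real.zero_rpow (by linarith), mul_zero]
  rw [h2, add_zero, hU, Finset.sum_biUnion]
  · apply Finset.sum_congr rfl
    intro i _
    rw [SubmodularHypergraph.vol, Finset.mul_sum]
    apply Finset.sum_congr rfl
    intro v hv
    rw [psiMap_apply_mem hdisj t hv]
    ring
  · intro i _ j _ hij
    exact hdisj i j hij

end SubmodularHypergraph

end PsiAux


section PowSum

lemma rpow_sum_le_card_mul_sum_rpow {ι : Type*} (J : Finset ι) (c : ι → ℝ)
    (hc : ∀ i ∈ J, 0 ≤ c i) {p : ℝ} (hp : 1 ≤ p) :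
    (∑ i ∈ J, c i) ^ p ≤ (J.card : ℝ) ^ (p - 1) * ∑ i ∈ J, c i ^ p := by
  rcases Finset.eq_empty_or_nonempty J with rfl | hJ
  · simp [Real.zero_rpow (show p ≠ 0 by linarith)]
  have hn : (0:ℝ) < J.card := by exact_mod_cast Finset.card_pos.2 hJ
  have key := Real.rpow_arith_mean_le_arith_mean_rpow J (fun _ => (J.card : ℝ)⁻¹) c
      (fun i _ => by positivity) (by rw [Finset.sum_const, nsmul_eq_mul]; field_simp) hc hp
  have hinner : ∀ i ∈ J, 0 ≤ (J.card : ℝ)⁻¹ * c i := fun i hi => by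
    have := hc i hi; positivity
  have h1 : ∑ i ∈ J, c i = (J.card : ℝ) * ∑ i ∈ J, (J.card : ℝ)⁻¹ * c i := by
    rw [← Finset.mul_sum, ← mul_assoc, mul_inv_cancel₀ (ne_of_gt hn), one_mul]
  calc (∑ i ∈ J, c i) ^ p
      = ((J.card : ℝ) * ∑ i ∈ J, (J.card : ℝ)⁻¹ * c i) ^ p := by rw [← h1]
    _ = (J.card : ℝ) ^ p * (∑ i ∈ J, (J.card : ℝ)⁻¹ * c i) ^ p := by
        rw [Real.mul_rpow (le_of_lt hn) (Finset.sum_nonneg hinner)]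
    _ ≤ (J.card : ℝ) ^ p * ∑ i ∈ J, (J.card : ℝ)⁻¹ * c i ^ p := by
        apply mul_le_mul_of_nonneg_left key (Real.rpow_nonneg (le_of_lt hn) p)
    _ = (J.card : ℝ) ^ p * ((J.card : ℝ)⁻¹ * ∑ i ∈ J, c i ^ p) := by
        rw [← Finset.mul_sum]
    _ = (J.card : ℝ) ^ (p - 1) * ∑ i ∈ J, c i ^ p := by
        rw [← mul_assoc, Real.rpow_sub hn, Real.rpow_one, div_eq_mul_inv]

lemma add_rpow_le_two_rpow (x y : ℝ) (hx : 0 ≤ x) (hy : 0 ≤ y) {p : ℝ} (hp : 1 ≤ p) :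
    (x + y) ^ p ≤ (2:ℝ) ^ (p - 1) * (x ^ p + y ^ p) := by
  have h := rpow_sum_le_card_mul_sum_rpow (Finset.univ : Finset Bool)
      (fun s => if s then x else y) (fun s _ => by cases s <;> simp [hx, hy]) hp
  simpa [Fintype.sum_bool, add_comm] using h

end PowSum

section EdgeLemmas

namespace SubmodularHypergraph

variable {N : ℕ} (G : SubmodularHypergraph N)

lemma w_rpow_le {e S : Finset (Fin N)} (he : e ∈ G.E) {p : ℝ} (hp : 1 ≤ p) :
    G.w e S ^ p ≤ G.w e S := by
  rcases eq_or_lt_of_le (G.w_nonneg e he S) with h0 | h0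
  · rw [← h0, Real.zero_rpow (by linarith)]
  · calc G.w e S ^ p ≤ G.w e S ^ (1:ℝ) :=
        Real.rpow_le_rpow_of_exponent_ge h0 (G.w_le_one e he S) hp
      _ = G.w e S := Real.rpow_one _

/-- The general per-edge estimate. -/
lemma fe_psi_rpow_le {p : ℝ} (hp : 1 ≤ p) {k : ℕ} (hk : 1 ≤ k) (hkN : k ≤ N)
    {S : Fin k → Finset (Fin N)} (hdisj : ∀ i j, i ≠ j → Disjoint (S i) (S j))
    (t : Fin k → ℝ) {e : Finset (Fin N)} (he : e ∈ G.E) :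
    G.fe e (psiMap S t) ^ p ≤ ((min (G.E.sup Finset.card) k : ℕ) : ℝ) ^ (p - 1)
      * ∑ i, |t i| ^ p * G.w e (S i) := by
  classical
  haveI : Nonempty (Fin N) := ⟨⟨0, lt_of_lt_of_le hk hkN⟩⟩
  set J := Finset.univ.filter (fun i : Fin k => (S i ∩ e).Nonempty) with hJ
  have hw0 : ∀ i : Fin k, i ∉ J → G.w e (S i) = 0 := by
    intro i hi
    rw [G.w_inter e he]
    have hie : S i ∩ e = ∅ := by
      rw [← Finset.not_nonempty_iff_eq_empty]
      intro hne
      exact hi (Finset.mem_filter.2 ⟨Finset.mem_univ _, hne⟩)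
    rw [hie, G.w_empty e he]
  have hsum1 : ∑ i, |t i| * G.w e (S i) = ∑ i ∈ J, |t i| * G.w e (S i) :=
    (Finset.sum_subset (Finset.subset_univ J)
      (fun i _ hi => by rw [hw0 i hi, mul_zero])).symm
  have h2 : G.fe e (psiMap S t) ^ p ≤ (∑ i ∈ J, |t i| * G.w e (S i)) ^ p := by
    apply Real.rpow_le_rpow (G.fe_nonneg he _) _ (by linarith)
    rw [← hsum1]
    exact G.fe_psi_le hdisj t he
  have h3 := rpow_sum_le_card_mul_sum_rpow J (fun i => |t i| * G.w e (S i))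
    (fun i _ => mul_nonneg (abs_nonneg _) (G.w_nonneg e he _)) hp
  -- cardinality bound
  have hJk : J.card ≤ k := le_trans (Finset.card_le_univ J) (le_of_eq (Finset.card_fin k))
  have hJe : J.card ≤ G.E.sup Finset.card := by
    have hJcard : J.card ≤ e.card := by
      have hmaps : ∀ i ∈ J, (if h : (S i ∩ e).Nonempty then h.choose
          else Classical.arbitrary (Fin N)) ∈ e := by
        intro i hi
        have hne := (Finset.mem_filter.1 hi).2
        rw [dif_pos hne]
        exact (Finset.mem_inter.1 hne.choose_spec).2
      apply Finset.card_le_card_of_injOn _ hmaps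
      intro i hi j hj hij
      rw [Finset.mem_coe, Finset.mem_filter] at hi hj
      have hnei := hi.2; have hnej := hj.2
      simp only [dif_pos hnei, dif_pos hnej] at hij
      by_contra hne
      have h1 : hnei.choose ∈ S i := (Finset.mem_inter.1 hnei.choose_spec).1
      have h2 : hnej.choose ∈ S j := (Finset.mem_inter.1 hnej.choose_spec).1
      rw [hij] at h1
      exact (Finset.disjoint_left.1 (hdisj i j hne)) h1 h2
    exact le_trans hJcard (Finset.le_sup he)
  have hcard : (J.card : ℝ) ^ (p - 1) ≤ ((min (G.E.sup Finset.card) k : ℕ) : ℝ) ^ (p - 1) := by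
    apply Real.rpow_le_rpow (Nat.cast_nonneg _) _ (by linarith)
    exact_mod_cast le_min hJe hJk
  have h4 : ∑ i ∈ J, (|t i| * G.w e (S i)) ^ p ≤ ∑ i, |t i| ^ p * G.w e (S i) := by
    refine le_trans (Finset.sum_le_sum ?_)
      (Finset.sum_le_sum_of_subset_of_nonneg (Finset.subset_univ J) ?_)
    · intro i _
      rw [Real.mul_rpow (abs_nonneg _) (G.w_nonneg e he _)]
      exact mul_le_mul_of_nonneg_left (G.w_rpow_le he hp)
        (Real.rpow_nonneg (abs_nonneg _) p)
    · intro i _ _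
      exact mul_nonneg (Real.rpow_nonneg (abs_nonneg _) p) (G.w_nonneg e he _)
  calc G.fe e (psiMap S t) ^ p ≤ (∑ i ∈ J, |t i| * G.w e (S i)) ^ p := h2
    _ ≤ (J.card : ℝ) ^ (p - 1) * ∑ i ∈ J, (|t i| * G.w e (S i)) ^ p := h3
    _ ≤ ((min (G.E.sup Finset.card) k : ℕ) : ℝ) ^ (p - 1) * ∑ i, |t i| ^ p * G.w e (S i) := by
        apply mul_le_mul hcard h4 (Finset.sum_nonneg fun i _ =>
          Real.rpow_nonneg (mul_nonneg (abs_nonneg _) (G.w_nonneg e he _)) p)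
          (Real.rpow_nonneg (Nat.cast_nonneg _) _)

/-- The homogeneous per-edge estimate. -/
lemma fe_psi_rpow_le_homog (hhom : G.Homogeneous) {p : ℝ} (hp : 1 ≤ p) {k : ℕ}
    {S : Fin k → Finset (Fin N)} (hdisj : ∀ i j, i ≠ j → Disjoint (S i) (S j))
    (t : Fin k → ℝ) {e : Finset (Fin N)} (he : e ∈ G.E) :
    G.fe e (psiMap S t) ^ p ≤ (2 : ℝ) ^ (p - 1) * ∑ i, |t i| ^ p * G.w e (S i) := by
  classical
  set x := psiMap S t with hx
  set a := e.sup' (G.edge_nonempty he) x with ha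
  set b := e.inf' (G.edge_nonempty he) x with hb
  have hba : b ≤ a := by
    obtain ⟨v, hv⟩ := G.edge_nonempty he
    exact le_trans (Finset.inf'_le _ hv) (Finset.le_sup' _ hv)
  have hfe_ab : G.fe e x ≤ a - b := G.fe_le_sup_sub_inf he x
  have hfe0 : 0 ≤ G.fe e x := G.fe_nonneg he x
  have hRnn : 0 ≤ ∑ i, |t i| ^ p * G.w e (S i) :=
    Finset.sum_nonneg fun i _ =>
      mul_nonneg (Real.rpow_nonneg (abs_nonneg _) p) (G.w_nonneg e he _)
  rcases eq_or_lt_of_le hba with hab | hab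
  · -- constant on e : fe = 0
    have hfe : G.fe e x = 0 := le_antisymm (by rw [← hab] at hfe_ab; linarith) hfe0
    rw [hfe, Real.zero_rpow (by linarith)]
    positivity
  · -- key claim
    have hkey : ∀ c : ℝ, c ≠ 0 → (∃ v ∈ e, x v = c) → (∃ u ∈ e, x u ≠ c) →
        ∃ i, t i = c ∧ G.w e (S i) = 1 := by
      rintro c hc ⟨v, hv, hvc⟩ ⟨u, hu, huc⟩
      have hvS : ∃ i, v ∈ S i := by
        by_contra hno
        push_neg at hno
        have h0 : x v = 0 := psiMap_apply_not t hno
        rw [hvc] at h0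
        exact hc h0
      obtain ⟨i, hi⟩ := hvS
      have hti : t i = c := by
        rw [← hvc]
        exact (psiMap_apply_mem hdisj t hi).symm
      refine ⟨i, hti, ?_⟩
      rw [G.w_inter e he]
      apply hhom e he _ Finset.inter_subset_right
      · rw [← Finset.nonempty_iff_ne_empty]
        exact ⟨v, Finset.mem_inter.2 ⟨hi, hv⟩⟩
      · intro heq
        have hue : u ∈ S i ∩ e := by rw [heq]; exact hu
        have : x u = c := by
          rw [← hti]
          exact psiMap_apply_mem hdisj t (Finset.mem_inter.1 hue).1
        exact huc this
    obtain ⟨va, hva, hxa⟩ := Finset.exists_mem_eq_sup' (G.edge_nonempty he) x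
    obtain ⟨vb, hvb, hxb⟩ := Finset.exists_mem_eq_inf' (G.edge_nonempty he) x
    have hxa' : x va = a := hxa.symm
    have hxb' : x vb = b := hxb.symm
    have hclaim : |a| ^ p + |b| ^ p ≤ ∑ i, |t i| ^ p * G.w e (S i) := by
      by_cases ha0 : a = 0
      · have hb0 : b ≠ 0 := by rw [ha0] at hab; exact ne_of_lt hab
        obtain ⟨i, hti, hwi⟩ := hkey b hb0 ⟨vb, hvb, hxb'⟩
          ⟨va, hva, by rw [hxa']; exact ne_of_gt hab⟩
        rw [ha0, abs_zero, Real.zero_rpow (by linarith), zero_add]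
        have : |b| ^ p = |t i| ^ p * G.w e (S i) := by rw [hti, hwi, mul_one]
        rw [this]
        exact Finset.single_le_sum (fun j _ =>
          mul_nonneg (Real.rpow_nonneg (abs_nonneg _) p) (G.w_nonneg e he _))
          (Finset.mem_univ i)
      · by_cases hb0 : b = 0
        · obtain ⟨i, hti, hwi⟩ := hkey a ha0 ⟨va, hva, hxa'⟩
            ⟨vb, hvb, by rw [hxb']; exact ne_of_lt hab⟩
          rw [hb0, abs_zero, Real.zero_rpow (by linarith), add_zero]
          have : |a| ^ p = |t i| ^ p * G.w e (S i) := by rw [hti, hwi, mul_one]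
          rw [this]
          exact Finset.single_le_sum (fun j _ =>
            mul_nonneg (Real.rpow_nonneg (abs_nonneg _) p) (G.w_nonneg e he _))
            (Finset.mem_univ i)
        · obtain ⟨ia, htia, hwia⟩ := hkey a ha0 ⟨va, hva, hxa'⟩
            ⟨vb, hvb, by rw [hxb']; exact ne_of_lt hab⟩
          obtain ⟨ib, htib, hwib⟩ := hkey b hb0 ⟨vb, hvb, hxb'⟩
            ⟨va, hva, by rw [hxa']; exact ne_of_gt hab⟩
          have hne : ia ≠ ib := by
            intro h
            rw [h, htib] at htia
            exact absurd htia (ne_of_lt hab)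
          have hpair : |a| ^ p + |b| ^ p
              = ∑ i ∈ ({ia, ib} : Finset (Fin k)), |t i| ^ p * G.w e (S i) := by
            rw [Finset.sum_pair hne, htia, htib, hwia, hwib, mul_one, mul_one]
          rw [hpair]
          apply Finset.sum_le_sum_of_subset_of_nonneg (Finset.subset_univ _)
          intro i _ _
          exact mul_nonneg (Real.rpow_nonneg (abs_nonneg _) p) (G.w_nonneg e he _)
    calc G.fe e x ^ p ≤ (a - b) ^ p := Real.rpow_le_rpow hfe0 hfe_ab (by linarith)
      _ ≤ (|a| + |b|) ^ p := by
          apply Real.rpow_le_rpow (by linarith) _ (by linarith)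
          have h1 := le_abs_self a
          have h2 := neg_abs_le b
          linarith
      _ ≤ (2:ℝ) ^ (p - 1) * (|a| ^ p + |b| ^ p) :=
          add_rpow_le_two_rpow _ _ (abs_nonneg _) (abs_nonneg _) hp
      _ ≤ (2:ℝ) ^ (p - 1) * ∑ i, |t i| ^ p * G.w e (S i) := by
          apply mul_le_mul_of_nonneg_left hclaim
          exact Real.rpow_nonneg (by norm_num) _

end SubmodularHypergraph

end EdgeLemmas


section Master

namespace SubmodularHypergraph

variable {N : ℕ} (G : SubmodularHypergraph N)

lemma vol_pos {S : Finset (Fin N)} (hS : S.Nonempty) : 0 < G.vol S :=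
  Finset.sum_pos (fun v _ => G.μ_pos v) hS

lemma vol_nonneg (S : Finset (Fin N)) : 0 ≤ G.vol S :=
  Finset.sum_nonneg fun v _ => le_of_lt (G.μ_pos v)

lemma volB_nonneg (S : Finset (Fin N)) : 0 ≤ G.volB S :=
  Finset.sum_nonneg fun e he => mul_nonneg (le_of_lt (G.θ_pos e he)) (G.w_nonneg e he S)

lemma conductance_nonneg (S : Finset (Fin N)) : 0 ≤ G.conductance S :=
  div_nonneg (G.volB_nonneg S) (le_min (G.vol_nonneg _) (G.vol_nonneg _))

lemma cheegerConst_nonneg (k : ℕ) (hk : 1 ≤ k) : 0 ≤ G.cheegerConst k := by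
  apply Real.sInf_nonneg
  rintro c ⟨S, hne, hdisj, rfl⟩
  have hbdd : BddAbove (Set.range fun i => G.conductance (S i)) :=
    (Set.finite_range _).bddAbove
  exact le_trans (G.conductance_nonneg (S ⟨0, by omega⟩))
    (le_ciSup hbdd (⟨0, by omega⟩ : Fin k))

lemma cheegerSet_nonempty (k : ℕ) (hk : 1 ≤ k) (hkN : k ≤ N) :
    ∃ c : ℝ, ∃ S : Fin k → Finset (Fin N),
      (∀ i, (S i).Nonempty) ∧ (∀ i j, i ≠ j → Disjoint (S i) (S j)) ∧
      c = ⨆ i, G.conductance (S i) := by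
  refine ⟨_, fun i => {Fin.castLE hkN i}, fun i => ⟨_, Finset.mem_singleton_self _⟩,
    ?_, rfl⟩
  intro i j hij
  rw [Finset.disjoint_singleton]
  intro h
  exact hij (Fin.castLE_injective hkN h)

lemma varEigen_mem_nonneg {p : ℝ} (hp : 1 ≤ p) {k : ℕ} (hk : 1 ≤ k) :
    ∀ a ∈ ((fun A : Set (Fin N → ℝ) => sSup (G.Q p '' A)) ''
      {A | IsClosed A ∧ (∀ x ∈ A, -x ∈ A) ∧
        A ⊆ {x | G.normLpPow p x = 1} ∧ (k : ℕ∞) ≤ genus A}), 0 ≤ a := by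
  rintro a ⟨A, ⟨hc, hs, hsub, hg⟩, rfl⟩
  show 0 ≤ sSup (G.Q p '' A)
  obtain ⟨x, hx⟩ := nonempty_of_le_genus hk hg
  rcases em (BddAbove (G.Q p '' A)) with hb | hb
  · exact le_trans (G.Q_nonneg hp x) (le_csSup hb ⟨x, hx, rfl⟩)
  · rw [Real.sSup_of_not_bddAbove hb]

lemma varEigen_one_nonpos {p : ℝ} (hp : 1 ≤ p) (hN : 1 ≤ N) : G.varEigen p 1 ≤ 0 := by
  classical
  haveI : Nonempty (Fin N) := ⟨⟨0, hN⟩⟩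
  have hp0 : (0:ℝ) < p := by linarith
  have hμ : (0:ℝ) < ∑ v, G.μ v :=
    Finset.sum_pos (fun v _ => G.μ_pos v) Finset.univ_nonempty
  set c : ℝ := (∑ v, G.μ v)⁻¹ ^ (1/p) with hc
  have hcpos : 0 < c := Real.rpow_pos_of_pos (inv_pos.2 hμ) _
  have hcp : c ^ p = (∑ v, G.μ v)⁻¹ := by
    rw [hc, ← Real.rpow_mul (le_of_lt (inv_pos.2 hμ)), one_div_mul_cancel (ne_of_gt hp0),
      Real.rpow_one]
  set x₀ : Fin N → ℝ := fun _ => c with hx₀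
  set A : Set (Fin N → ℝ) := {x₀, -x₀} with hA
  have hnorm : ∀ x ∈ A, G.normLpPow p x = 1 := by
    rintro x (rfl | rfl)
    · rw [normLpPow]
      have : ∀ v : Fin N, G.μ v * |x₀ v| ^ p = G.μ v * (∑ u, G.μ u)⁻¹ := by
        intro v
        rw [hx₀, abs_of_pos hcpos, hcp]
      rw [Finset.sum_congr rfl fun v _ => this v, ← Finset.sum_mul,
        mul_inv_cancel₀ (ne_of_gt hμ)]
    · rw [normLpPow]
      have : ∀ v : Fin N, G.μ v * |(-x₀) v| ^ p = G.μ v * (∑ u, G.μ u)⁻¹ := by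
        intro v
        rw [Pi.neg_apply, abs_neg, hx₀, abs_of_pos hcpos, hcp]
      rw [Finset.sum_congr rfl fun v _ => this v, ← Finset.sum_mul,
        mul_inv_cancel₀ (ne_of_gt hμ)]
  have hQ0 : ∀ x ∈ A, G.Q p x = 0 := by
    have hconst : ∀ d : ℝ, G.Q p (fun _ : Fin N => d) = 0 := by
      intro d
      rw [Q]
      apply Finset.sum_eq_zero
      intro e he
      have hfe : G.fe e (fun _ => d) = 0 := by
        rw [fe, lovasz]
        have h1 : (⨅ _ : Fin N, d) = d := ciInf_const
        have h2 : (⨆ _ : Fin N, d) = d := ciSup_const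
        rw [h1, h2, intervalIntegral.integral_same]
      rw [hfe, Real.zero_rpow (ne_of_gt hp0), mul_zero]
    rintro x (rfl | rfl)
    · exact hconst c
    · have : -x₀ = fun _ : Fin N => -c := rfl
      rw [this]
      exact hconst (-c)
  have hmem : sSup (G.Q p '' A) ∈ ((fun A : Set (Fin N → ℝ) => sSup (G.Q p '' A)) ''
      {A | IsClosed A ∧ (∀ x ∈ A, -x ∈ A) ∧
        A ⊆ {x | G.normLpPow p x = 1} ∧ ((1:ℕ) : ℕ∞) ≤ genus A}) := by
    refine ⟨A, ⟨?_, ?_, ?_, ?_⟩, rfl⟩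
    · exact (Set.toFinite A).isClosed
    · rintro x (rfl | rfl)
      · exact Set.mem_insert_iff.2 (Or.inr (Set.mem_singleton _))
      · rw [neg_neg]
        exact Set.mem_insert _ _
    · exact hnorm
    · rw [le_genus_iff]
      intro n hn
      rcases Nat.eq_zero_or_pos n with rfl | h
      · exfalso
        have : A = ∅ := (genusLE_zero_iff A).1 hn
        rw [Set.eq_empty_iff_forall_notMem] at this
        exact this x₀ (Set.mem_insert _ _)
      · exact h
  have hsup : sSup (G.Q p '' A) ≤ 0 := by
    apply Real.sSup_le _ le_rfl
    rintro y ⟨x, hx, rfl⟩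
    exact le_of_eq (hQ0 x hx)
  refine le_trans (csInf_le ⟨0, fun a ha => G.varEigen_mem_nonneg hp le_rfl a ha⟩ hmem) hsup

set_option maxHeartbeats 1000000 in
lemma varEigen_le_of_edge_bound {p : ℝ} (hp : 1 ≤ p) {k : ℕ} (hk2 : 2 ≤ k) (hkN : k ≤ N)
    {C : ℝ} (hC : 0 ≤ C)
    {S : Fin k → Finset (Fin N)} (hne : ∀ i, (S i).Nonempty)
    (hdisj : ∀ i j, i ≠ j → Disjoint (S i) (S j))
    (hedge : ∀ e ∈ G.E, ∀ t : Fin k → ℝ,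
      G.fe e (psiMap S t) ^ p ≤ C * ∑ i, |t i| ^ p * G.w e (S i))
    (hT : ∃ A₀ : Set (Fin N → ℝ), IsClosed A₀ ∧ (∀ x ∈ A₀, -x ∈ A₀) ∧
      A₀ ⊆ {x | G.normLpPow p x = 1} ∧ (k : ℕ∞) ≤ genus A₀) :
    G.varEigen p k ≤ C * ⨆ i, G.conductance (S i) := by
  classical
  have hp0 : (0:ℝ) < p := by linarith
  set K : Set (Fin k → ℝ) := {t | ∑ i, |t i| ^ p * G.vol (S i) = 1} with hK
  set Astar : Set (Fin N → ℝ) := (fun t => psiMap S t) '' K with hAstar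
  -- K is compact
  have hsfun_cont : Continuous fun t : Fin k → ℝ => ∑ i, |t i| ^ p * G.vol (S i) := by
    apply continuous_finset_sum
    intro i _
    exact (((continuous_apply i).abs).rpow_const
      (fun _ => Or.inr (le_of_lt hp0))).mul continuous_const
  have hKclosed : IsClosed K := isClosed_eq hsfun_cont continuous_const
  have hKbound : K ⊆ Set.pi Set.univ
      (fun i => Set.Icc (-((G.vol (S i))⁻¹ ^ (1/p))) ((G.vol (S i))⁻¹ ^ (1/p))) := by
    intro t ht
    rw [Set.mem_univ_pi]
    intro i
    have hvol := G.vol_pos (hne i)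
    have h1 : |t i| ^ p * G.vol (S i) ≤ 1 := by
      rw [← ht]
      apply Finset.single_le_sum (fun j _ => mul_nonneg
        (Real.rpow_nonneg (abs_nonneg _) p) (G.vol_nonneg _)) (Finset.mem_univ i)
    have h2 : |t i| ^ p ≤ (G.vol (S i))⁻¹ := by
      rw [← one_div, le_div_iff₀ hvol]
      exact h1
    have h3 : |t i| ≤ (G.vol (S i))⁻¹ ^ (1/p) := by
      have := Real.rpow_le_rpow (Real.rpow_nonneg (abs_nonneg _) p) h2
        (le_of_lt (one_div_pos.2 hp0))
      rwa [← Real.rpow_mul (abs_nonneg _), mul_one_div_cancel (ne_of_gt hp0),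
        Real.rpow_one] at this
    exact Set.mem_Icc.2 (abs_le.1 h3)
  have hKcomp : IsCompact K :=
    (isCompact_univ_pi fun i => isCompact_Icc).of_isClosed_subset hKclosed hKbound
  have hψcont : Continuous fun t : Fin k → ℝ => psiMap S t := continuous_psiMap S
  have hAstarclosed : IsClosed Astar := (hKcomp.image hψcont).isClosed
  have hKneg : ∀ t ∈ K, -t ∈ K := by
    intro t ht
    simp only [hK, Set.mem_setOf_eq] at ht ⊢
    simpa [abs_neg] using ht
  have hAstarsymm : ∀ x ∈ Astar, -x ∈ Astar := by
    rintro x ⟨t, ht, rfl⟩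
    exact ⟨-t, hKneg t ht, psiMap_neg S t⟩
  have hAstarsub : Astar ⊆ {x | G.normLpPow p x = 1} := by
    rintro x ⟨t, ht, rfl⟩
    rw [Set.mem_setOf_eq, G.normLpPow_psi hp hdisj t]
    exact ht
  -- genus bound
  obtain ⟨A₀, hA₀c, hA₀s, hA₀sub, hA₀g⟩ := hT
  have hA₀ne0 : ∀ x ∈ A₀, x ≠ 0 := by
    intro x hx h0
    have h1 := hA₀sub hx
    rw [h0, Set.mem_setOf_eq, normLpPow] at h1
    have h2 : ∀ v ∈ Finset.univ, G.μ v * |(0 : Fin N → ℝ) v| ^ p = 0 := by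
      intro v _
      rw [Pi.zero_apply, abs_zero, Real.zero_rpow (ne_of_gt hp0), mul_zero]
    rw [Finset.sum_eq_zero h2] at h1
    norm_num at h1
  have hfin : ∃ n, genusLE A₀ n :=
    ⟨N, id, continuous_id.continuousOn, fun x _ => rfl, fun x hx => hA₀ne0 x hx⟩
  obtain ⟨Z, φ, hZA₀, hZc, hZs, hφc, hφodd, hφne, hZgen⟩ :=
    exists_genus_core hA₀c hA₀s k ((le_genus_iff A₀ k).1 hA₀g) hfin
  set sfun : (Fin k → ℝ) → ℝ := fun u => ∑ i, |u i| ^ p * G.vol (S i) with hsfun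
  have hsfun_pos : ∀ u : Fin k → ℝ, u ≠ 0 → 0 < sfun u := by
    intro u hu
    obtain ⟨i, hi⟩ := Function.ne_iff.1 hu
    apply Finset.sum_pos' (fun j _ => mul_nonneg
      (Real.rpow_nonneg (abs_nonneg _) p) (G.vol_nonneg _))
    exact ⟨i, Finset.mem_univ i, mul_pos (Real.rpow_pos_of_pos (abs_pos.2 hi) p)
      (G.vol_pos (hne i))⟩
  set ν : (Fin k → ℝ) → (Fin k → ℝ) := fun u i => u i / (sfun u) ^ (1/p) with hν
  have hνK : ∀ u : Fin k → ℝ, u ≠ 0 → ν u ∈ K := by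
    intro u hu
    have hs := hsfun_pos u hu
    have hd : 0 < (sfun u) ^ (1/p) := Real.rpow_pos_of_pos hs _
    simp only [hK, Set.mem_setOf_eq]
    have : ∀ i, |ν u i| ^ p * G.vol (S i) = |u i| ^ p * G.vol (S i) / sfun u := by
      intro i
      rw [hν]
      have h1 : |u i / (sfun u) ^ (1/p)| = |u i| / (sfun u) ^ (1/p) := by
        rw [abs_div, abs_of_pos hd]
      rw [h1, Real.div_rpow (abs_nonneg _) (le_of_lt hd)]
      have h2 : ((sfun u) ^ (1/p)) ^ p = sfun u := by
        rw [← Real.rpow_mul (le_of_lt hs), one_div_mul_cancel (ne_of_gt hp0),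
          Real.rpow_one]
      rw [h2]
      ring
    rw [Finset.sum_congr rfl fun i _ => this i, ← Finset.sum_div, div_self (ne_of_gt hs)]
  have hνodd : ∀ u : Fin k → ℝ, ν (-u) = -ν u := by
    intro u
    have hsneg : sfun (-u) = sfun u := by
      simp only [hsfun]
      apply Finset.sum_congr rfl
      intro i _
      rw [Pi.neg_apply, abs_neg]
    funext i
    have hdef : ∀ w : Fin k → ℝ, ν w i = w i / (sfun w) ^ (1/p) := fun w => rfl
    rw [Pi.neg_apply, hdef, hdef, hsneg, Pi.neg_apply, neg_div]
  have hνcont : ContinuousOn ν {u : Fin k → ℝ | u ≠ 0} := by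
    rw [continuousOn_pi]
    intro i
    apply ContinuousOn.div
    · exact (continuous_apply i).continuousOn
    · exact hsfun_cont.continuousOn.rpow_const
        (fun u _ => Or.inr (le_of_lt (one_div_pos.2 hp0)))
    · intro u hu
      exact ne_of_gt (Real.rpow_pos_of_pos (hsfun_pos u hu) _)
  have hkgenAstar : (k : ℕ∞) ≤ genus Astar := by
    rw [le_genus_iff]
    intro n hgle
    apply hZgen n
    refine genusLE_comp (f := fun z => psiMap S (ν (φ z))) ?_ ?_ ?_ hgle
    · apply hψcont.comp_continuousOn
      exact hνcont.comp hφc (fun z hz => hφne z hz)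
    · intro z hz
      exact ⟨ν (φ z), hνK _ (hφne z hz), rfl⟩
    · intro z hz
      show psiMap S (ν (φ (-z))) = -psiMap S (ν (φ z))
      rw [hφodd z hz, hνodd, psiMap_neg]
  -- the estimate on Astar
  set csup := ⨆ i, G.conductance (S i) with hcsup
  have hbdd : BddAbove (Set.range fun i => G.conductance (S i)) :=
    (Set.finite_range _).bddAbove
  have hcsup0 : 0 ≤ csup := le_trans (G.conductance_nonneg (S ⟨0, by omega⟩))
    (le_ciSup hbdd (⟨0, by omega⟩ : Fin k))
  have hvolB : ∀ i, G.volB (S i) ≤ csup * G.vol (S i) := by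
    intro i
    have hSproper : (S i)ᶜ.Nonempty := by
      have hjex : ∃ j : Fin k, j ≠ i := by
        rcases eq_or_ne i ⟨0, by omega⟩ with h0 | h0
        · exact ⟨⟨1, by omega⟩, by rw [h0]; intro h; simp [Fin.ext_iff] at h⟩
        · exact ⟨⟨0, by omega⟩, fun h => h0 h.symm⟩
      obtain ⟨j, hj⟩ := hjex
      obtain ⟨u, hu⟩ := hne j
      exact ⟨u, Finset.mem_compl.2 fun hui =>
        (Finset.disjoint_left.1 (hdisj j i hj)) hu hui⟩
    have hmin : 0 < min (G.vol (S i)) (G.vol (S i)ᶜ) :=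
      lt_min (G.vol_pos (hne i)) (G.vol_pos hSproper)
    have heq : G.volB (S i) = G.conductance (S i) * min (G.vol (S i)) (G.vol (S i)ᶜ) := by
      rw [conductance, div_mul_cancel₀ _ (ne_of_gt hmin)]
    rw [heq]
    exact mul_le_mul (le_ciSup hbdd i) (min_le_left _ _) (le_of_lt hmin) hcsup0
  have hQle : ∀ x ∈ Astar, G.Q p x ≤ C * csup := by
    rintro x ⟨t, ht, rfl⟩
    have hQ1 : G.Q p (psiMap S t) ≤ C * ∑ i, |t i| ^ p * G.volB (S i) := by
      rw [Q]
      calc ∑ e ∈ G.E, G.θ e * G.fe e (psiMap S t) ^ p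
          ≤ ∑ e ∈ G.E, G.θ e * (C * ∑ i, |t i| ^ p * G.w e (S i)) :=
            Finset.sum_le_sum fun e he => mul_le_mul_of_nonneg_left (hedge e he t)
              (le_of_lt (G.θ_pos e he))
        _ = ∑ e ∈ G.E, ∑ i, C * (|t i| ^ p * (G.θ e * G.w e (S i))) := by
            refine Finset.sum_congr rfl fun e _ => ?_
            rw [Finset.mul_sum, Finset.mul_sum]
            refine Finset.sum_congr rfl fun i _ => ?_
            ring
        _ = ∑ i, ∑ e ∈ G.E, C * (|t i| ^ p * (G.θ e * G.w e (S i))) := Finset.sum_comm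
        _ = C * ∑ i, |t i| ^ p * G.volB (S i) := by
            rw [Finset.mul_sum]
            refine Finset.sum_congr rfl fun i _ => ?_
            rw [volB, Finset.mul_sum, Finset.mul_sum]
            try rfl
            try (refine Finset.sum_congr rfl fun e _ => ?_; ring)
    have hfac : ∑ i, |t i| ^ p * (csup * G.vol (S i))
        = csup * ∑ i, |t i| ^ p * G.vol (S i) := by
      rw [Finset.mul_sum]
      refine Finset.sum_congr rfl fun i _ => ?_
      ring
    calc G.Q p (psiMap S t) ≤ C * ∑ i, |t i| ^ p * G.volB (S i) := hQ1
      _ ≤ C * ∑ i, |t i| ^ p * (csup * G.vol (S i)) := by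
          apply mul_le_mul_of_nonneg_left _ hC
          apply Finset.sum_le_sum
          intro i _
          exact mul_le_mul_of_nonneg_left (hvolB i)
            (Real.rpow_nonneg (abs_nonneg _) p)
      _ = C * (csup * ∑ i, |t i| ^ p * G.vol (S i)) := by rw [hfac]
      _ = C * csup := by rw [ht, mul_one]
  have hmem : sSup (G.Q p '' Astar) ∈ ((fun A : Set (Fin N → ℝ) => sSup (G.Q p '' A)) ''
      {A | IsClosed A ∧ (∀ x ∈ A, -x ∈ A) ∧
        A ⊆ {x | G.normLpPow p x = 1} ∧ (k : ℕ∞) ≤ genus A}) :=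
    ⟨Astar, ⟨hAstarclosed, hAstarsymm, hAstarsub, hkgenAstar⟩, rfl⟩
  have hsup_le : sSup (G.Q p '' Astar) ≤ C * csup := by
    apply Real.sSup_le _ (mul_nonneg hC hcsup0)
    rintro y ⟨x, hx, rfl⟩
    exact hQle x hx
  exact le_trans (csInf_le ⟨0, fun a ha =>
    G.varEigen_mem_nonneg hp (by omega) a ha⟩ hmem) hsup_le

lemma varEigen_le_mul_cheeger {p : ℝ} (hp : 1 ≤ p) {k : ℕ} (hk1 : 1 ≤ k) (hkN : k ≤ N)
    {C : ℝ} (hC : 0 ≤ C)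
    (hedge : ∀ (S : Fin k → Finset (Fin N)), (∀ i, (S i).Nonempty) →
      (∀ i j, i ≠ j → Disjoint (S i) (S j)) → ∀ e ∈ G.E, ∀ t : Fin k → ℝ,
      G.fe e (psiMap S t) ^ p ≤ C * ∑ i, |t i| ^ p * G.w e (S i)) :
    G.varEigen p k ≤ C * G.cheegerConst k := by
  classical
  have hcheeg0 : 0 ≤ G.cheegerConst k := G.cheegerConst_nonneg k hk1
  rcases eq_or_lt_of_le hk1 with hk1' | hk2
  · -- k = 1
    have hk1'' : k = 1 := hk1'.symm
    subst hk1''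
    exact le_trans (G.varEigen_one_nonpos hp (le_trans hk1 hkN))
      (mul_nonneg hC hcheeg0)
  · -- k ≥ 2
    by_cases hT : {A : Set (Fin N → ℝ) | IsClosed A ∧ (∀ x ∈ A, -x ∈ A) ∧
        A ⊆ {x | G.normLpPow p x = 1} ∧ (k : ℕ∞) ≤ genus A} = ∅
    · rw [varEigen, hT, Set.image_empty, Real.sInf_empty]
      exact mul_nonneg hC hcheeg0
    · obtain ⟨A₀, hA₀⟩ := Set.nonempty_iff_ne_empty.2 hT
      have hkey : ∀ c ∈ {c : ℝ | ∃ S : Fin k → Finset (Fin N),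
          (∀ i, (S i).Nonempty) ∧ (∀ i j, i ≠ j → Disjoint (S i) (S j)) ∧
          c = ⨆ i, G.conductance (S i)}, G.varEigen p k ≤ C * c := by
        rintro c ⟨S, hne, hdisj, rfl⟩
        exact G.varEigen_le_of_edge_bound hp hk2 hkN hC hne hdisj (hedge S hne hdisj)
          ⟨A₀, hA₀.1, hA₀.2.1, hA₀.2.2.1, hA₀.2.2.2⟩
      obtain ⟨c₀, S₀, hS₀ne, hS₀disj, hc₀⟩ := G.cheegerSet_nonempty k hk1 hkN
      have hc₀mem : c₀ ∈ {c : ℝ | ∃ S : Fin k → Finset (Fin N),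
          (∀ i, (S i).Nonempty) ∧ (∀ i j, i ≠ j → Disjoint (S i) (S j)) ∧
          c = ⨆ i, G.conductance (S i)} := ⟨S₀, hS₀ne, hS₀disj, hc₀⟩
      rcases eq_or_lt_of_le hC with hC0 | hC0
      · have := hkey c₀ hc₀mem
        rw [← hC0, zero_mul] at this ⊢
        exact this
      · rw [cheegerConst]
        have hdiv : G.varEigen p k / C ≤ sInf {c : ℝ | ∃ S : Fin k → Finset (Fin N),
            (∀ i, (S i).Nonempty) ∧ (∀ i j, i ≠ j → Disjoint (S i) (S j)) ∧
            c = ⨆ i, G.conductance (S i)} := by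
          apply le_csInf ⟨c₀, hc₀mem⟩
          intro c hc
          rw [div_le_iff₀ hC0, mul_comm]
          exact hkey c hc
        calc G.varEigen p k = (G.varEigen p k / C) * C := by field_simp
          _ ≤ sInf _ * C := mul_le_mul_of_nonneg_right hdiv (le_of_lt hC0)
          _ = C * sInf _ := mul_comm _ _

end SubmodularHypergraph

end Master

/-- Cheeger upper bounds. For `p ≥ 1` and `1 ≤ k ≤ N`,
`λ_k^{(p)} ≤ (min{ζ(E), k})^{p−1} h_k`; for homogeneous hypergraphs the tighter bound
`λ_k^{(p)} ≤ 2^{p−1} h_k` holds. -/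
theorem stmt9 {N : ℕ} (G : SubmodularHypergraph N) (p : ℝ) (hp : 1 ≤ p)
    (k : ℕ) (hk1 : 1 ≤ k) (hkN : k ≤ N) :
    G.varEigen p k
      ≤ ((min (G.E.sup Finset.card) k : ℕ) : ℝ) ^ (p - 1) * G.cheegerConst k ∧
    (G.Homogeneous → G.varEigen p k ≤ (2 : ℝ) ^ (p - 1) * G.cheegerConst k) := by
  constructor
  · apply G.varEigen_le_mul_cheeger hp hk1 hkN (Real.rpow_nonneg (Nat.cast_nonneg _) _)
    intro S hne hdisj e he t
    exact G.fe_psi_rpow_le hp hk1 hkN hdisj t he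
  · intro hhom
    apply G.varEigen_le_mul_cheeger hp hk1 hkN
      (Real.rpow_nonneg (by norm_num : (0:ℝ) ≤ 2) _)
    intro S hne hdisj e he t
    exact G.fe_psi_rpow_le_homog hhom hp hdisj t he
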